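/- Let q ≥ 1 be an integer, let a ∈ ℝ, and let δ be a real number with 0 < δ < 1/q. Then lim_{M→∞} ∫_{0}^{δ} e^{2πiax} · sin((2M+1)πqx) / sin(πqx) dx = 1/(2q). -/

import Mathlib

open MeasureTheory intervalIntegral Finset Filter FourierTransform

private lemma geom_sin (M : ℕ) (t : ℝ) :
    Complex.sin t * ∑ j ∈ Finset.range (2 * M + 1),
      Complex.exp ((2 * (j : ℂ) - 2 * M) * t * Complex.I)
      = Complex.sin ((2 * M + 1) * t) := by
  have h := Finset.sum_range_sub
    (fun j => Complex.exp ((2 * (j : ℂ) - 2 * (M : ℂ) - 1) * (t : ℂ) * Complex.I) * (-Complex.I / 2))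
    (2 * M + 1)
  push_cast at h
  have hterm : ∀ j ∈ Finset.range (2 * M + 1),
      Complex.exp ((2 * ((j:ℂ)+1) - 2 * (M : ℂ) - 1) * (t : ℂ) * Complex.I) * (-Complex.I / 2)
      - Complex.exp ((2 * (j : ℂ) - 2 * (M : ℂ) - 1) * (t : ℂ) * Complex.I) * (-Complex.I / 2)
      = Complex.sin t * Complex.exp ((2 * (j : ℂ) - 2 * M) * t * Complex.I) := by
    intro j _
    rw [Complex.sin]
    have e1 : ((2 * ((j:ℂ)+1) - 2 * (M : ℂ) - 1) * (t : ℂ) * Complex.I)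
        = (t:ℂ) * Complex.I + (2 * (j : ℂ) - 2 * M) * t * Complex.I := by ring
    have e2 : ((2 * (j:ℂ) - 2 * (M : ℂ) - 1) * (t : ℂ) * Complex.I)
        = -(t:ℂ) * Complex.I + (2 * (j : ℂ) - 2 * M) * t * Complex.I := by ring
    rw [e1, e2, Complex.exp_add, Complex.exp_add]
    ring
  rw [Finset.sum_congr rfl hterm, ← Finset.mul_sum] at h
  rw [h, Complex.sin]
  push_cast
  have e3 : ((2 * (2*(M:ℂ)+1) - 2 * (M : ℂ) - 1) * (t : ℂ) * Complex.I)
      = ((2*(M:ℂ)+1) * t) * Complex.I := by ring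
  have e4 : ((2 * 0 - 2 * (M : ℂ) - 1) * (t : ℂ) * Complex.I)
      = -((2*(M:ℂ)+1) * t) * Complex.I := by ring
  rw [e3, e4]
  ring

private lemma kernel_eq (M : ℕ) (t : ℝ) (ht : Real.sin t ≠ 0) :
    ((Real.sin ((2 * M + 1) * t) / Real.sin t : ℝ) : ℂ)
      = ∑ j ∈ Finset.range (2 * M + 1),
          Complex.exp ((2 * (j : ℂ) - 2 * M) * t * Complex.I) := by
  have hs : Complex.sin (t:ℂ) ≠ 0 := by
    rw [← Complex.ofReal_sin]; exact_mod_cast ht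
  rw [Complex.ofReal_div, Complex.ofReal_sin, Complex.ofReal_sin, div_eq_iff hs,
    show (((2*(M:ℕ)+1) * t : ℝ) : ℂ) = (2*(M:ℂ)+1)*(t:ℂ) by push_cast; ring,
    ← geom_sin M t, mul_comm]

private lemma kernel_bound (M : ℕ) (t : ℝ) (ht : Real.sin t ≠ 0) :
    |Real.sin ((2 * M + 1) * t) / Real.sin t| ≤ 2 * M + 1 := by
  have h := kernel_eq M t ht
  have h0 : ‖((Real.sin ((2 * M + 1) * t) / Real.sin t : ℝ) : ℂ)‖
      = |Real.sin ((2 * M + 1) * t) / Real.sin t| := by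
    rw [Complex.norm_real, Real.norm_eq_abs]
  rw [← h0, h]
  calc ‖∑ j ∈ Finset.range (2 * M + 1),
      Complex.exp ((2 * (j : ℂ) - 2 * M) * t * Complex.I)‖
      ≤ ∑ j ∈ Finset.range (2 * M + 1), ‖Complex.exp ((2 * (j : ℂ) - 2 * M) * t * Complex.I)‖ :=
        norm_sum_le _ _
    _ ≤ 2 * M + 1 := by
        have heq : ∀ j ∈ Finset.range (2 * M + 1),
            ‖Complex.exp ((2 * (j : ℂ) - 2 * M) * t * Complex.I)‖ = 1 := by
          intro j _
          rw [Complex.norm_exp]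
          simp
        rw [Finset.sum_congr rfl heq]
        simp
private lemma half_integral (q : ℕ) (hq : 1 ≤ q) (M : ℕ) :
    ∫ x in (0:ℝ)..(1/(2*(q:ℝ))),
      ((Real.sin ((2 * M + 1) * Real.pi * q * x) / Real.sin (Real.pi * q * x) : ℝ) : ℂ)
      = 1 / (2 * (q : ℂ)) := by
  have hq0 : (0:ℝ) < q := by exact_mod_cast hq
  have hqC : (q : ℂ) ≠ 0 := by exact_mod_cast hq0.ne'
  set b : ℝ := 1/(2*(q:ℝ)) with hbdef
  have hb : (0:ℝ) ≤ b := by positivity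
  set c : ℕ → ℂ := fun j => (2 * (j:ℂ) - 2 * M) * Real.pi * q * Complex.I with hc
  rw [integral_of_le hb]
  have hcongr : Set.EqOn
      (fun x : ℝ => ((Real.sin ((2 * M + 1) * Real.pi * q * x) / Real.sin (Real.pi * q * x) : ℝ) : ℂ))
      (fun x : ℝ => ∑ j ∈ Finset.range (2 * M + 1), Complex.exp (c j * x)) (Set.Ioc 0 b) := by
    intro x hx
    have hx0 : 0 < Real.pi * q * x := by
      have := hx.1; positivity
    have hxpi : Real.pi * q * x < Real.pi := by
      have h2 : (q:ℝ) * x ≤ (q:ℝ) * b := by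
        exact mul_le_mul_of_nonneg_left hx.2 hq0.le
      have h3 : (q:ℝ) * b = 1/2 := by rw [hbdef]; field_simp
      nlinarith [Real.pi_pos]
    have hsin : Real.sin (Real.pi * q * x) ≠ 0 :=
      (Real.sin_pos_of_pos_of_lt_pi hx0 hxpi).ne'
    have := kernel_eq M (Real.pi * q * x) hsin
    simp only [hc]
    rw [show (2 * (M:ℝ) + 1) * Real.pi * q * x = (2 * M + 1) * (Real.pi * q * x) by ring, this]
    refine Finset.sum_congr rfl fun j _ => ?_
    congr 1
    push_cast
    ring
  rw [setIntegral_congr_fun measurableSet_Ioc hcongr]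
  rw [integral_finset_sum _ (fun j _ =>
    ((by continuity : Continuous fun x : ℝ => Complex.exp (c j * (x:ℝ)))).integrableOn_Ioc)]
  have hval : ∀ j, (∫ x in Set.Ioc (0:ℝ) b, Complex.exp (c j * x)) = ∫ x in (0:ℝ)..b, Complex.exp (c j * x) :=
    fun j => (integral_of_le hb).symm
  simp only [hval]
  rw [← Finset.add_sum_erase _ _ (Finset.mem_range.mpr (by omega) : M ∈ Finset.range (2*M+1))]
  have hcM : c M = 0 := by rw [hc]; ring_nf
  have hIM : (∫ x in (0:ℝ)..b, Complex.exp (c M * x)) = ((b:ℝ) : ℂ) := by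
    simp [hcM]
  have hpi : (Real.pi : ℂ) ≠ 0 := by exact_mod_cast Real.pi_ne_zero
  have herase : (∑ j ∈ (Finset.range (2*M+1)).erase M,
      ∫ x in (0:ℝ)..b, Complex.exp (c j * x)) = 0 := by
    apply Finset.sum_involution (fun j _ => 2*M - j)
    · intro j hj
      have hjM : j ≠ M := (Finset.mem_erase.mp hj).1
      have hjlt : j < 2*M+1 := Finset.mem_range.mp (Finset.mem_erase.mp hj).2
      have hjle : j ≤ 2*M := by omega
      have hcast : ((2*M - j : ℕ) : ℂ) = 2*(M:ℂ) - j := by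
        push_cast [Nat.cast_sub hjle]; ring
      have hjC : ((j:ℂ) - M) ≠ 0 := by
        intro h
        apply hjM
        have : (j:ℂ) = M := by linear_combination h
        exact_mod_cast this
      have hcj : c j ≠ 0 := by
        rw [hc]
        simp only []
        intro h
        rcases mul_eq_zero.mp h with h' | h'
        · rcases mul_eq_zero.mp h' with h'' | h''
          · rcases mul_eq_zero.mp h'' with h3 | h3
            · exact hjC (by linear_combination h3/2)
            · exact hpi h3
          · exact hqC h''
        · exact Complex.I_ne_zero h'
      have hc2 : c (2*M - j) = - c j := by
        rw [hc]; simp only []; rw [hcast]; ring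
      rw [integral_exp_mul_complex hcj, integral_exp_mul_complex (hc2 ▸ neg_ne_zero.mpr hcj)]
      rw [hc2]
      have hE : Complex.exp (c j * b) = Complex.exp (-c j * b) := by
        have harg : (c j * b : ℂ) = -(c j * b) + (((j:ℤ) - (M:ℤ) : ℤ) : ℂ) * (2 * Real.pi * Complex.I) := by
          rw [hc]
          simp only []
          rw [hbdef]
          push_cast
          field_simp
          ring
        rw [harg, Complex.exp_add, Complex.exp_int_mul_two_pi_mul_I, mul_one, neg_mul]
      rw [hE]
      field_simp
      simp only [Complex.ofReal_zero, mul_zero, neg_zero]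
      ring
    · intro j hj _
      have hjM : j ≠ M := (Finset.mem_erase.mp hj).1
      have hjlt : j < 2*M+1 := Finset.mem_range.mp (Finset.mem_erase.mp hj).2
      omega
    · intro j hj
      have hjM : j ≠ M := (Finset.mem_erase.mp hj).1
      have hjlt : j < 2*M+1 := Finset.mem_range.mp (Finset.mem_erase.mp hj).2
      rw [Finset.mem_erase, Finset.mem_range]
      omega
    · intro j hj
      have hjlt : j < 2*M+1 := Finset.mem_range.mp (Finset.mem_erase.mp hj).2
      omega
  rw [hIM, herase, add_zero, hbdef]
  push_cast
  ring

private lemma exp_I_integrable {F : ℝ → ℂ} (hF : Integrable F) (c : ℝ) :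
    Integrable (fun x : ℝ => Complex.exp ((c : ℂ) * x * Complex.I) * F x) := by
  apply hF.bdd_mul (c := 1)
  · exact (Complex.continuous_exp.comp (by continuity)).aestronglyMeasurable
  · refine Filter.Eventually.of_forall (fun x => ?_)
    rw [Complex.norm_exp]
    simp

private lemma rl_sin {F : ℝ → ℂ} (hF : Integrable F) {lam : ℕ → ℝ}
    (hlam : Tendsto lam atTop atTop) :
    Tendsto (fun n => ∫ x : ℝ, ((Real.sin (lam n * x) : ℝ) : ℂ) * F x) atTop (nhds 0) := by
  set G : ℝ → ℂ := fun w => ∫ v : ℝ, Complex.exp ((w : ℂ) * v * Complex.I) * F v with hG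
  have hRL : Tendsto (fun w : ℝ => G (-2 * Real.pi * w)) (Filter.cocompact ℝ) (nhds 0) := by
    have h := Real.tendsto_integral_exp_smul_cocompact F
    have heq : (fun w : ℝ => ∫ v : ℝ, 𝐞 (-(v * w)) • F v)
        = fun w : ℝ => G (-2 * Real.pi * w) := by
      funext w
      rw [hG]
      congr 1
      funext v
      rw [Circle.smul_def, Real.fourierChar_apply]
      congr 1
      push_cast
      ring
    rwa [heq] at h
  have hπ : (0:ℝ) < 2 * Real.pi := by positivity
  have hcomp : ∀ (s : ℕ → ℝ), Tendsto s atTop atTop →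
      Tendsto (fun n => G (s n)) atTop (nhds 0) := by
    intro s hs
    have h1 : Tendsto (fun n => -(s n) / (2 * Real.pi)) atTop atBot := by
      simpa [neg_div] using tendsto_neg_atBot_iff.mpr (hs.atTop_div_const hπ)
    have h2 : Tendsto (fun n => -(s n) / (2 * Real.pi)) atTop (Filter.cocompact ℝ) :=
      h1.mono_right (by rw [cocompact_eq_atBot_atTop]; exact le_sup_left)
    have heq : (fun n => G (s n))
        = (fun w : ℝ => G (-2 * Real.pi * w)) ∘ (fun n => -(s n) / (2 * Real.pi)) := by
      funext n
      simp only [Function.comp]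
      congr 1
      field_simp
    rw [heq]
    exact hRL.comp h2
  have hcompneg : ∀ (s : ℕ → ℝ), Tendsto s atTop atTop →
      Tendsto (fun n => G (-(s n))) atTop (nhds 0) := by
    intro s hs
    have h1 : Tendsto (fun n => (s n) / (2 * Real.pi)) atTop atTop :=
      hs.atTop_div_const hπ
    have h2 : Tendsto (fun n => (s n) / (2 * Real.pi)) atTop (Filter.cocompact ℝ) :=
      h1.mono_right (by rw [cocompact_eq_atBot_atTop]; exact le_sup_right)
    have heq : (fun n => G (-(s n)))
        = (fun w : ℝ => G (-2 * Real.pi * w)) ∘ (fun n => (s n) / (2 * Real.pi)) := by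
      funext n
      simp only [Function.comp]
      congr 1
      field_simp
    rw [heq]
    exact hRL.comp h2
  have key : ∀ n, (∫ x : ℝ, ((Real.sin (lam n * x) : ℝ) : ℂ) * F x)
      = (G (-(lam n)) - G (lam n)) * Complex.I / 2 := by
    intro n
    rw [hG]
    simp only []
    rw [← integral_sub (exp_I_integrable hF _) (exp_I_integrable hF _)]
    rw [← MeasureTheory.integral_mul_const, ← MeasureTheory.integral_div]
    congr 1
    ext x
    rw [Complex.ofReal_sin, Complex.sin]
    push_cast
    ring_nf
  simp only [key]
  have := ((hcompneg lam hlam).sub (hcomp lam hlam)).mul_const Complex.I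
  simpa using this.div_const 2

private lemma exp_I_sub_one_bound (s : ℝ) : ‖Complex.exp ((s:ℂ) * Complex.I) - 1‖ ≤ 2 * |s| := by
  rcases le_or_gt |s| 1 with h | h
  · have habs : ‖(s:ℂ) * Complex.I‖ = |s| := by
      rw [norm_mul, Complex.norm_I, Complex.norm_real, Real.norm_eq_abs, mul_one]
    have := Complex.norm_exp_sub_one_le (x := (s:ℂ) * Complex.I) (by rwa [habs])
    rwa [habs] at this
  · have h1 : ‖Complex.exp ((s:ℂ) * Complex.I)‖ = 1 := by
      rw [Complex.norm_exp]
      simp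
    calc ‖Complex.exp ((s:ℂ) * Complex.I) - 1‖
        ≤ ‖Complex.exp ((s:ℂ) * Complex.I)‖ + ‖(1:ℂ)‖ := norm_sub_le _ _
      _ = 2 := by rw [h1]; norm_num
      _ ≤ 2 * |s| := by nlinarith

private lemma jordan_low {T x : ℝ} (hT : T ≤ Real.pi) (hx0 : 0 < x) (hxT : x ≤ T) :
    (x / T) * Real.sin T ≤ Real.sin x := by
  have hT0 : 0 < T := lt_of_lt_of_le hx0 hxT
  have key := strictConcaveOn_sin_Icc.concaveOn.2
    (Set.mem_Icc.mpr ⟨hT0.le, hT⟩) (Set.mem_Icc.mpr ⟨le_refl 0, Real.pi_pos.le⟩)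
    (div_nonneg hx0.le hT0.le) (sub_nonneg.mpr (div_le_one_of_le₀ hxT hT0.le))
    (by field_simp; ring)
  simp only [smul_eq_mul, Real.sin_zero, mul_zero, add_zero] at key
  rwa [show x / T * T = x by field_simp] at key

private lemma kernel_integrableOn (q : ℕ) (hq : 1 ≤ q) (M : ℕ) {u v : ℝ}
    (h0 : 0 ≤ u) (hv : v < 1/(q:ℝ)) :
    IntegrableOn (fun x : ℝ =>
      ((Real.sin ((2*M+1)*Real.pi*q*x) / Real.sin (Real.pi*q*x) : ℝ) : ℂ)) (Set.Ioc u v) := by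
  have hq0 : (0:ℝ) < q := by exact_mod_cast hq
  apply Measure.integrableOn_of_bounded (M := 2*M+1) measure_Ioc_lt_top.ne
  · apply Measurable.aestronglyMeasurable
    apply Complex.measurable_ofReal.comp
    exact ((by continuity : Continuous fun x : ℝ => Real.sin ((2*M+1)*Real.pi*q*x)).measurable).div
      ((by continuity : Continuous fun x : ℝ => Real.sin (Real.pi*q*x)).measurable)
  · filter_upwards [ae_restrict_mem measurableSet_Ioc] with x hx
    have hx0 : 0 < x := lt_of_le_of_lt h0 hx.1
    have hxp : 0 < Real.pi * q * x := by positivity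
    have hxpi : Real.pi * q * x < Real.pi := by
      have h1 : (q:ℝ) * x < 1 := by
        calc (q:ℝ)*x ≤ q*v := mul_le_mul_of_nonneg_left hx.2 hq0.le
          _ < q*(1/q) := mul_lt_mul_of_pos_left hv hq0
          _ = 1 := by field_simp
      nlinarith [Real.pi_pos]
    have hsin : Real.sin (Real.pi*q*x) ≠ 0 := (Real.sin_pos_of_pos_of_lt_pi hxp hxpi).ne'
    have hb := kernel_bound M (Real.pi*q*x) hsin
    rw [show (2*(M:ℝ)+1)*(Real.pi*q*x) = (2*M+1)*Real.pi*q*x by ring] at hb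
    calc ‖(((Real.sin ((2*M+1)*Real.pi*q*x) / Real.sin (Real.pi*q*x) :ℝ)):ℂ)‖
        = |Real.sin ((2*M+1)*Real.pi*q*x) / Real.sin (Real.pi*q*x)| := by
          rw [Complex.norm_real, Real.norm_eq_abs]
      _ ≤ 2*M+1 := hb

private lemma rl_sin_interval {g : ℝ → ℂ} {u v : ℝ} (hg : IntegrableOn g (Set.uIoc u v))
    {lam : ℕ → ℝ} (hlam : Tendsto lam atTop atTop) :
    Tendsto (fun n => ∫ x in u..v, ((Real.sin (lam n * x) : ℝ) : ℂ) * g x) atTop (nhds 0) := by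
  have hInd : Integrable ((Set.uIoc u v).indicator g) :=
    (integrable_indicator_iff measurableSet_uIoc).mpr hg
  have hrl := rl_sin hInd hlam
  have heq : ∀ n, (∫ x in u..v, ((Real.sin (lam n * x) : ℝ) : ℂ) * g x)
      = (if u ≤ v then (1:ℝ) else -1) •
        ∫ x : ℝ, ((Real.sin (lam n * x) : ℝ) : ℂ) * (Set.uIoc u v).indicator g x := by
    intro n
    rw [intervalIntegral.intervalIntegral_eq_integral_uIoc]
    congr 1
    rw [← MeasureTheory.integral_indicator measurableSet_uIoc]
    congr 1
    funext x
    rw [Set.indicator_mul_right]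
  simp only [heq]
  have := hrl.const_smul (if u ≤ v then (1:ℝ) else -1)
  simpa using this

/-- The half-mass endpoint computation in the proof of the paper's Theorem 3: for an
integer `q ≥ 1` and `0 < δ < 1/q`,
`lim_{M→∞} ∫_{0}^{δ} e^{2πiax} sin((2M+1)πqx)/sin(πqx) dx = 1/(2q)`. -/
theorem dirichlet_kernel_half_mass (q : ℕ) (hq : 1 ≤ q)
    (a : ℝ) (δ : ℝ) (hδ0 : 0 < δ) (hδ1 : δ < 1 / q) :
    Filter.Tendsto (fun M : ℕ =>
        ∫ x in (0 : ℝ)..δ,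
          Complex.exp (2 * Real.pi * Complex.I * a * x) *
            ((Real.sin ((2 * M + 1) * Real.pi * q * x) / Real.sin (Real.pi * q * x) : ℝ) : ℂ))
      Filter.atTop
      (nhds (1 / (2 * (q : ℂ)))) := by
  have hq0 : (0:ℝ) < q := by exact_mod_cast hq
  have hπ : 0 < Real.pi := Real.pi_pos
  set b : ℝ := 1/(2*(q:ℝ)) with hbdef
  have hb0 : 0 < b := by rw [hbdef]; positivity
  have hbq : b < 1/(q:ℝ) := by
    rw [hbdef, div_lt_div_iff₀ (by positivity) hq0]
    nlinarith
  have hqδ : (q:ℝ) * δ < 1 := by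
    have := (lt_div_iff₀ hq0).mp hδ1
    linarith [this]
  have hsinδ : 0 < Real.sin (Real.pi * q * δ) := by
    apply Real.sin_pos_of_pos_of_lt_pi (by positivity)
    nlinarith
  -- the frequency sequence
  have hlam : Filter.Tendsto (fun M : ℕ => (2*(M:ℝ)+1)*Real.pi*(q:ℝ)) atTop atTop := by
    apply Filter.Tendsto.atTop_mul_const hq0
    apply Filter.Tendsto.atTop_mul_const hπ
    apply tendsto_atTop_add_const_right
    exact tendsto_natCast_atTop_atTop.const_mul_atTop two_pos
  -- positivity of sin on the relevant range
  have hsin_pos : ∀ x : ℝ, 0 < x → x < 1/(q:ℝ) → 0 < Real.sin (Real.pi * q * x) := by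
    intro x hx0 hx1
    apply Real.sin_pos_of_pos_of_lt_pi (by positivity)
    have : (q:ℝ) * x < 1 := by
      have := (lt_div_iff₀ hq0).mp hx1
      linarith
    nlinarith
  -- integrability of g₁ on (0, δ]
  have hg1 : IntegrableOn
      (fun x : ℝ => (Complex.exp (2*Real.pi*Complex.I*a*x) - 1) / ((Real.sin (Real.pi*q*x) : ℝ) : ℂ))
      (Set.uIoc 0 δ) := by
    rw [Set.uIoc_of_le hδ0.le]
    apply Measure.integrableOn_of_bounded
      (M := 4*Real.pi*|a| * δ / Real.sin (Real.pi*q*δ)) measure_Ioc_lt_top.ne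
    · apply Measurable.aestronglyMeasurable
      apply Measurable.div
      · exact ((Complex.continuous_exp.comp
          (continuous_const.mul Complex.continuous_ofReal)).sub continuous_const).measurable
      · exact (Complex.continuous_ofReal.comp
          (Real.continuous_sin.comp (continuous_const.mul continuous_id))).measurable
    · filter_upwards [ae_restrict_mem measurableSet_Ioc] with x hx
      have hx0 : 0 < x := hx.1
      have hxδ : x ≤ δ := hx.2
      have hjord : (x/δ) * Real.sin (Real.pi*q*δ) ≤ Real.sin (Real.pi*q*x) := by
        have h := jordan_low (T := Real.pi*q*δ) (by nlinarith) (by positivity : 0 < Real.pi*q*x)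
          (mul_le_mul_of_nonneg_left hxδ (by positivity) : Real.pi*q*x ≤ Real.pi*q*δ)
        rwa [show (Real.pi*q*x)/(Real.pi*q*δ) = x/δ by
          rw [div_eq_div_iff (by positivity : Real.pi*(q:ℝ)*δ ≠ 0) hδ0.ne']; ring] at h
      have hden_pos : 0 < (x/δ) * Real.sin (Real.pi*q*δ) := by positivity
      have hnum : ‖Complex.exp (2*Real.pi*Complex.I*a*x) - 1‖ ≤ 4*Real.pi*|a| * x := by
        have := exp_I_sub_one_bound (2*Real.pi*a*x)
        rw [show ((2*Real.pi*a*x : ℝ) : ℂ) * Complex.I = 2*Real.pi*Complex.I*a*x by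
          push_cast; ring] at this
        calc ‖Complex.exp (2*Real.pi*Complex.I*a*x) - 1‖ ≤ 2*|2*Real.pi*a*x| := this
          _ = 4*Real.pi*|a| * x := by
              rw [abs_mul, abs_mul, abs_mul, abs_of_pos hπ, abs_of_pos hx0]
              norm_num
              ring
      rw [norm_div, Complex.norm_real, Real.norm_eq_abs,
        abs_of_pos (lt_of_lt_of_le hden_pos hjord)]
      calc ‖Complex.exp (2*Real.pi*Complex.I*a*x) - 1‖ / Real.sin (Real.pi*q*x)
          ≤ (4*Real.pi*|a| * x) / ((x/δ) * Real.sin (Real.pi*q*δ)) :=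
            div_le_div₀ (by positivity) hnum hden_pos hjord
        _ = 4*Real.pi*|a| * δ / Real.sin (Real.pi*q*δ) := by
            rw [div_eq_div_iff hden_pos.ne' hsinδ.ne']
            field_simp
  -- integrability of g₂ on the interval between b and δ
  have hmaxlt : max b δ < 1/(q:ℝ) := max_lt hbq hδ1
  have hminpos : 0 < min b δ := lt_min hb0 hδ0
  have hg2 : IntegrableOn (fun x : ℝ => 1/((Real.sin (Real.pi*q*x) : ℝ) : ℂ))
      (Set.uIoc b δ) := by
    apply intervalIntegrable_iff.mp
    apply ContinuousOn.intervalIntegrable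
    apply ContinuousOn.div continuousOn_const
    · exact (Complex.continuous_ofReal.comp
        (Real.continuous_sin.comp (continuous_const.mul continuous_id))).continuousOn
    · intro x hx
      have hx1 : min b δ ≤ x := hx.1
      have hx2 : x ≤ max b δ := hx.2
      have : 0 < Real.sin (Real.pi*q*x) :=
        hsin_pos x (lt_of_lt_of_le hminpos hx1) (lt_of_le_of_lt hx2 hmaxlt)
      exact_mod_cast this.ne'
  -- interval integrability of the kernel
  have hKδ : ∀ M : ℕ, IntervalIntegrable
      (fun x : ℝ => ((Real.sin ((2*M+1)*Real.pi*q*x) / Real.sin (Real.pi*q*x) : ℝ) : ℂ))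
      volume 0 δ := by
    intro M
    rw [intervalIntegrable_iff, Set.uIoc_of_le hδ0.le]
    exact kernel_integrableOn q hq M le_rfl hδ1
  have hKb : ∀ M : ℕ, IntervalIntegrable
      (fun x : ℝ => ((Real.sin ((2*M+1)*Real.pi*q*x) / Real.sin (Real.pi*q*x) : ℝ) : ℂ))
      volume 0 b := by
    intro M
    rw [intervalIntegrable_iff, Set.uIoc_of_le hb0.le]
    exact kernel_integrableOn q hq M le_rfl hbq
  have hKbδ : ∀ M : ℕ, IntervalIntegrable
      (fun x : ℝ => ((Real.sin ((2*M+1)*Real.pi*q*x) / Real.sin (Real.pi*q*x) : ℝ) : ℂ))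
      volume b δ := by
    intro M
    rw [intervalIntegrable_iff]
    have : Set.uIoc b δ = Set.Ioc (min b δ) (max b δ) := rfl
    rw [this]
    exact kernel_integrableOn q hq M hminpos.le hmaxlt
  -- the two error terms tend to 0
  have hE1 : Filter.Tendsto (fun M : ℕ => ∫ x in (0:ℝ)..δ,
      ((Real.sin ((2*(M:ℝ)+1)*Real.pi*(q:ℝ) * x) : ℝ) : ℂ) *
        ((Complex.exp (2*Real.pi*Complex.I*a*x) - 1) / ((Real.sin (Real.pi*q*x) : ℝ) : ℂ)))
      atTop (nhds 0) :=
    rl_sin_interval hg1 hlam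
  have hE2 : Filter.Tendsto (fun M : ℕ => ∫ x in b..δ,
      ((Real.sin ((2*(M:ℝ)+1)*Real.pi*(q:ℝ) * x) : ℝ) : ℂ) *
        (1/((Real.sin (Real.pi*q*x) : ℝ) : ℂ)))
      atTop (nhds 0) :=
    rl_sin_interval hg2 hlam
  -- the splitting identity
  have hsplit : ∀ M : ℕ,
      (∫ x in (0:ℝ)..δ, Complex.exp (2 * Real.pi * Complex.I * a * x) *
        ((Real.sin ((2 * M + 1) * Real.pi * q * x) / Real.sin (Real.pi * q * x) : ℝ) : ℂ))
      = (∫ x in (0:ℝ)..δ,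
          ((Real.sin ((2*(M:ℝ)+1)*Real.pi*(q:ℝ) * x) : ℝ) : ℂ) *
            ((Complex.exp (2*Real.pi*Complex.I*a*x) - 1) / ((Real.sin (Real.pi*q*x) : ℝ) : ℂ)))
        + ((∫ x in b..δ,
            ((Real.sin ((2*(M:ℝ)+1)*Real.pi*(q:ℝ) * x) : ℝ) : ℂ) *
              (1/((Real.sin (Real.pi*q*x) : ℝ) : ℂ)))
          + 1 / (2 * (q : ℂ))) := by
    intro M
    have h1 : IntervalIntegrable (fun x : ℝ =>
        ((Real.sin ((2*(M:ℝ)+1)*Real.pi*(q:ℝ) * x) : ℝ) : ℂ) *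
          ((Complex.exp (2*Real.pi*Complex.I*a*x) - 1) / ((Real.sin (Real.pi*q*x) : ℝ) : ℂ)))
        volume 0 δ := by
      rw [intervalIntegrable_iff, Set.uIoc_of_le hδ0.le]
      apply Integrable.bdd_mul (c := 1)
      · rw [← Set.uIoc_of_le hδ0.le]; exact hg1
      · exact (Complex.continuous_ofReal.comp
          (Real.continuous_sin.comp (continuous_const.mul continuous_id))).aestronglyMeasurable
      · refine Filter.Eventually.of_forall (fun x => ?_)
        rw [Complex.norm_real, Real.norm_eq_abs]
        exact Real.abs_sin_le_one _
    have step1 : (∫ x in (0:ℝ)..δ, Complex.exp (2 * Real.pi * Complex.I * a * x) *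
        ((Real.sin ((2 * M + 1) * Real.pi * q * x) / Real.sin (Real.pi * q * x) : ℝ) : ℂ))
        = ∫ x in (0:ℝ)..δ,
          (((Real.sin ((2*(M:ℝ)+1)*Real.pi*(q:ℝ) * x) : ℝ) : ℂ) *
            ((Complex.exp (2*Real.pi*Complex.I*a*x) - 1) / ((Real.sin (Real.pi*q*x) : ℝ) : ℂ))
          + ((Real.sin ((2 * M + 1) * Real.pi * q * x) / Real.sin (Real.pi * q * x) : ℝ) : ℂ)) := by
      apply intervalIntegral.integral_congr
      intro x hx
      rw [Set.uIcc_of_le hδ0.le] at hx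
      rcases eq_or_lt_of_le hx.1 with h0 | hx0
      · simp [← h0]
      · have hsx : Real.sin (Real.pi*q*x) ≠ 0 :=
          (hsin_pos x hx0 (lt_of_le_of_lt hx.2 hδ1)).ne'
        have hsxC : ((Real.sin (Real.pi*q*x) : ℝ) : ℂ) ≠ 0 := by exact_mod_cast hsx
        simp only [Complex.ofReal_div]
        rw [show (2*(M:ℝ)+1)*Real.pi*(q:ℝ)*x = (2*M+1)*Real.pi*q*x by push_cast; ring]
        field_simp
        ring
    rw [step1, intervalIntegral.integral_add h1 (hKδ M),
      ← intervalIntegral.integral_add_adjacent_intervals (hKb M) (hKbδ M)]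
    congr 1
    rw [hbdef, half_integral q hq M, add_comm (1 / (2 * (q:ℂ)))]
    congr 1
    · apply intervalIntegral.integral_congr
      intro x hx
      have hx1 : min b δ ≤ x := hx.1
      have hx2 : x ≤ max b δ := hx.2
      have hsx : Real.sin (Real.pi*q*x) ≠ 0 :=
        (hsin_pos x (lt_of_lt_of_le hminpos hx1) (lt_of_le_of_lt hx2 hmaxlt)).ne'
      have hsxC : ((Real.sin (Real.pi*q*x) : ℝ) : ℂ) ≠ 0 := by exact_mod_cast hsx
      simp only [Complex.ofReal_div]
      rw [show (2*(M:ℝ)+1)*Real.pi*(q:ℝ)*x = (2*M+1)*Real.pi*q*x by push_cast; ring]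
      field_simp
  simp only [hsplit]
  have := hE1.add (hE2.add (tendsto_const_nhds (x := 1 / (2 * (q : ℂ)))))
  simpa using this
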